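/- Let I = ⟨p_1,...,p_r⟩ be a monomial ideal in R = k[x̄]. A monomial q of degree t represents a nonzero element of R/⟨p_1,...,p_{r−1}⟩ that becomes zero in R/⟨p_1,...,p_r⟩ if and only if q = a·p_r, where a is a monomial of degree t − deg(p_r) that is not divisible by any of the syzygy monomials m_{ir} = lcm(p_i,p_r)/p_r for 1 ≤ i < r; moreover this correspondence q ↔ a is a bijection. -/
import Mathlib


open MvPolynomial

/-- The total degree of an exponent vector. -/
def degD {a : ℕ} (d : Fin a →₀ ℕ) : ℕ := d.sum fun _ e => e

lemma degD_add {a : ℕ} (d e : Fin a →₀ ℕ) : degD (d + e) = degD d + degD e := by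
  simp [degD, Finsupp.sum_add_index]

lemma mono_mem_iff {k : Type*} [Field k] {A : ℕ} (S : Set ℕ) (p : ℕ → Fin A →₀ ℕ)
    (q : Fin A →₀ ℕ) :
    (monomial q 1 : MvPolynomial (Fin A) k) ∈
      Ideal.span ((fun i => (monomial (p i) 1 : MvPolynomial (Fin A) k)) '' S)
    ↔ ∃ i ∈ S, p i ≤ q := by
  classical
  have himg : (fun i => (monomial (p i) 1 : MvPolynomial (Fin A) k)) '' S
      = (fun s => (monomial s 1 : MvPolynomial (Fin A) k)) '' (p '' S) := by
    rw [Set.image_image]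
  rw [himg, mem_ideal_span_monomial_image]
  have hsupp : (monomial q 1 : MvPolynomial (Fin A) k).support = {q} := by
    rw [support_monomial, if_neg (one_ne_zero)]
  rw [hsupp]
  constructor
  · intro h
    obtain ⟨si, hsi, hle⟩ := h q (by simp)
    obtain ⟨i, hi, rfl⟩ := hsi
    exact ⟨i, hi, hle⟩
  · rintro ⟨i, hi, hle⟩ xi hxi
    simp only [Finset.mem_singleton] at hxi
    subst hxi
    exact ⟨p i, Set.mem_image_of_mem _ hi, hle⟩

/-- let `I = ⟨p_1,…,p_r⟩` be a monomial ideal in `R = k[x̄]`.  A monomial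
`q` of degree `t` represents a nonzero element of `R/⟨p_1,…,p_{r−1}⟩` that becomes zero
in `R/⟨p_1,…,p_r⟩` iff `q = a·p_r` for a monomial `a` of degree `t − deg p_r` divisible
by none of the syzygy monomials `m_{ir} = lcm(p_i,p_r)/p_r`, `1 ≤ i < r`; moreover such
an `a` is unique (the correspondence `q ↔ a` is a bijection).
(Indices are `0,…,r−1`; `p_r` is `p (r−1)`; divisibility of monomials is `≤` of
exponent vectors.) -/
theorem syzygy_membership_bijection {k : Type*} [Field k] (A r t : ℕ) (hr : 1 ≤ r)
    (p : ℕ → (Fin A →₀ ℕ)) (q : Fin A →₀ ℕ) (hq : degD q = t) :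
    ((monomial q 1 : MvPolynomial (Fin A) k) ∉
        Ideal.span ((fun i => (monomial (p i) 1 : MvPolynomial (Fin A) k)) ''
          (Set.Iio (r - 1))) ∧
      (monomial q 1 : MvPolynomial (Fin A) k) ∈
        Ideal.span ((fun i => (monomial (p i) 1 : MvPolynomial (Fin A) k)) ''
          (Set.Iio r)))
    ↔ ∃! e : Fin A →₀ ℕ,
        q = e + p (r - 1) ∧ degD e = t - degD (p (r - 1)) ∧
          ∀ i < r - 1, ¬ ((p i ⊔ p (r - 1)) - p (r - 1)) ≤ e := by
  rw [mono_mem_iff, mono_mem_iff]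
  simp only [Set.mem_Iio]
  constructor
  · rintro ⟨hnot, j, hj, hle⟩
    have hjr : j = r - 1 := by
      by_contra hne
      exact hnot ⟨j, by omega, hle⟩
    subst hjr
    refine ⟨q - p (r - 1), ⟨?_, ?_, ?_⟩, ?_⟩
    · exact (tsub_add_cancel_of_le hle).symm
    · have := degD_add (q - p (r - 1)) (p (r - 1))
      rw [tsub_add_cancel_of_le hle, hq] at this
      omega
    · intro i hi hcon
      refine hnot ⟨i, hi, ?_⟩
      have h1 : p i ⊔ p (r - 1) ≤ (q - p (r - 1)) + p (r - 1) :=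
        tsub_le_iff_right.mp hcon
      rw [tsub_add_cancel_of_le hle] at h1
      exact le_trans le_sup_left h1
    · rintro e ⟨heq, -, -⟩
      have : q - p (r - 1) = (e + p (r - 1)) - p (r - 1) := by rw [heq]
      simpa using this.symm
  · rintro ⟨e, ⟨heq, hdeg, hnd⟩, -⟩
    constructor
    · rintro ⟨i, hi, hle⟩
      refine hnd i hi ?_
      rw [tsub_le_iff_right]
      have : p i ≤ e + p (r - 1) := heq ▸ hle
      exact sup_le this le_add_self
    · exact ⟨r - 1, Nat.sub_lt hr one_pos, by rw [heq]; exact le_add_self⟩
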